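/- The family of bounded operators on ℓ²(ℕ) consisting of all ρP^k ∘ ρR^l for k,l ∈ ℕ, all ρP^k ∘ (ρR*)^l for k ∈ ℕ and l ∈ ℕ \ {0}, all ρP^k ∘ ρR^l ∘ ρT for k,l ∈ ℕ, and all ρP^k ∘ (ρR*)^l ∘ ρT* for k,l ∈ ℕ, is linearly independent over ℂ. -/

import Mathlib

set_option linter.unusedSectionVars false
set_option maxHeartbeats 1000000

open ContinuousLinearMap

local notation "⟪" x ", " y "⟫" => @inner ℂ _ _ x y

/-- coefficient of `ρR (e (m+2)) = cc q m • e m`. -/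
noncomputable def cc (q : ℝ) (m : ℕ) : ℝ :=
  Real.sqrt ((1 - q ^ (4 * (m + 2))) * (1 - q ^ (4 * (m + 1))))

/-- coefficient of `ρT (e (m+1)) = cT q m • e m`. -/
noncomputable def cT (q : ℝ) (m : ℕ) : ℝ := q ^ (2 * m) * Real.sqrt (1 - q ^ (4 * (m + 1)))

noncomputable def cRpow (q : ℝ) : ℕ → ℕ → ℝ
  | 0, _ => 1
  | (l + 1), m => cc q (m + 2 * l) * cRpow q l m

noncomputable def cRadj (q : ℝ) : ℕ → ℕ → ℝ
  | 0, _ => 1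
  | (l + 1), m => cc q m * cRadj q l (m + 2)

lemma cc_pos {q : ℝ} (hq0 : 0 < q) (hq1 : q < 1) (m : ℕ) : 0 < cc q m := by
  have h1 : q ^ (4 * (m + 2)) < 1 := pow_lt_one₀ hq0.le hq1 (by omega)
  have h2 : q ^ (4 * (m + 1)) < 1 := pow_lt_one₀ hq0.le hq1 (by omega)
  exact Real.sqrt_pos.mpr (mul_pos (by linarith) (by linarith))

lemma cT_pos {q : ℝ} (hq0 : 0 < q) (hq1 : q < 1) (m : ℕ) : 0 < cT q m := by
  have h2 : q ^ (4 * (m + 1)) < 1 := pow_lt_one₀ hq0.le hq1 (by omega)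
  exact mul_pos (pow_pos hq0 _) (Real.sqrt_pos.mpr (by linarith))

lemma cRpow_pos {q : ℝ} (hq0 : 0 < q) (hq1 : q < 1) (l m : ℕ) : 0 < cRpow q l m := by
  induction l with
  | zero => exact one_pos
  | succ l ih => exact mul_pos (cc_pos hq0 hq1 _) ih

lemma cRadj_pos {q : ℝ} (hq0 : 0 < q) (hq1 : q < 1) (l : ℕ) : ∀ m, 0 < cRadj q l m := by
  induction l with
  | zero => exact fun _ => one_pos
  | succ l ih => exact fun m => mul_pos (cc_pos hq0 hq1 _) (ih _)

abbrev Idx := (ℕ × ℕ) ⊕ ((ℕ × ℕ) ⊕ ((ℕ × ℕ) ⊕ (ℕ × ℕ)))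

def Kidx : Idx → ℕ
  | Sum.inl (k, _) => k
  | Sum.inr (Sum.inl (k, _)) => k
  | Sum.inr (Sum.inr (Sum.inl (k, _))) => k
  | Sum.inr (Sum.inr (Sum.inr (k, _))) => k

def δidx : Idx → ℤ
  | Sum.inl (_, l) => -(2 * l)
  | Sum.inr (Sum.inl (_, l)) => 2 * l + 2
  | Sum.inr (Sum.inr (Sum.inl (_, l))) => -(2 * l + 1)
  | Sum.inr (Sum.inr (Sum.inr (_, l))) => 2 * l + 1

def τidx : Idx → ℕ
  | Sum.inl (_, l) => 2 * l
  | Sum.inr (Sum.inl _) => 0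
  | Sum.inr (Sum.inr (Sum.inl (_, l))) => 2 * l + 1
  | Sum.inr (Sum.inr (Sum.inr _)) => 0

def μidx : Idx → ℕ → ℕ
  | Sum.inl (_, l), n => n - 2 * l
  | Sum.inr (Sum.inl (_, l)), n => n + 2 * l + 2
  | Sum.inr (Sum.inr (Sum.inl (_, l))), n => n - 2 * l - 1
  | Sum.inr (Sum.inr (Sum.inr (_, l))), n => n + 2 * l + 1

noncomputable def baseC (q : ℝ) : Idx → ℕ → ℝ
  | Sum.inl (_, l), n => cRpow q l (n - 2 * l)
  | Sum.inr (Sum.inl (_, l)), n => cRadj q (l + 1) n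
  | Sum.inr (Sum.inr (Sum.inl (_, l))), n => cT q (n - 1) * cRpow q l (n - 1 - 2 * l)
  | Sum.inr (Sum.inr (Sum.inr (_, l))), n => cT q n * cRadj q l (n + 1)

lemma baseC_pos {q : ℝ} (hq0 : 0 < q) (hq1 : q < 1) (i : Idx) (n : ℕ) : 0 < baseC q i n := by
  rcases i with ⟨k, l⟩ | ⟨⟨k, l⟩ | ⟨⟨k, l⟩ | ⟨k, l⟩⟩⟩ <;> simp only [baseC]
  · exact cRpow_pos hq0 hq1 _ _
  · exact cRadj_pos hq0 hq1 _ _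
  · exact mul_pos (cT_pos hq0 hq1 _) (cRpow_pos hq0 hq1 _ _)
  · exact mul_pos (cT_pos hq0 hq1 _) (cRadj_pos hq0 hq1 _ _)

lemma μ_cast (i : Idx) (n : ℕ) (hn : τidx i ≤ n) : (μidx i n : ℤ) = n + δidx i := by
  rcases i with ⟨k, l⟩ | ⟨⟨k, l⟩ | ⟨⟨k, l⟩ | ⟨k, l⟩⟩⟩ <;>
    simp only [μidx, δidx, τidx] at * <;> omega

lemma δ_K_inj {i j : Idx} (hδ : δidx i = δidx j) (hK : Kidx i = Kidx j) : i = j := by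
  rcases i with ⟨k, l⟩ | ⟨⟨k, l⟩ | ⟨⟨k, l⟩ | ⟨k, l⟩⟩⟩ <;>
    rcases j with ⟨k', l'⟩ | ⟨⟨k', l'⟩ | ⟨⟨k', l'⟩ | ⟨k', l'⟩⟩⟩ <;>
    simp only [δidx, Kidx] at * <;>
    first
      | omega
      | (obtain ⟨rfl, rfl⟩ : k = k' ∧ l = l' := ⟨by omega, by omega⟩; rfl)

lemma δ_eq_base {q : ℝ} {i j : Idx} (hδ : δidx i = δidx j) : baseC q i = baseC q j := by
  rcases i with ⟨k, l⟩ | ⟨⟨k, l⟩ | ⟨⟨k, l⟩ | ⟨k, l⟩⟩⟩ <;>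
    rcases j with ⟨k', l'⟩ | ⟨⟨k', l'⟩ | ⟨⟨k', l'⟩ | ⟨k', l'⟩⟩⟩ <;>
    simp only [δidx] at * <;>
    first
      | omega
      | (obtain rfl : l = l' := (by omega); funext n; rfl)

section OperatorLemmas

variable {H : Type*} [NormedAddCommGroup H] [InnerProductSpace ℂ H] [CompleteSpace H]
  (e : HilbertBasis ℕ ℂ H)

lemma ext_of_inner {x y : H} (h : ∀ j : ℕ, ⟪e j, x⟫ = ⟪e j, y⟫) : x = y := by
  apply e.repr.injective; apply lp.ext; funext j
  rw [e.repr_apply_apply, e.repr_apply_apply]; exact h j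

lemma inner_e (j m : ℕ) : ⟪e j, (e m : H)⟫ = if j = m then 1 else 0 :=
  orthonormal_iff_ite.mp e.orthonormal j m

variable (q : ℝ) (ρP ρT ρR : H →L[ℂ] H)

lemma adjT_apply (hT0 : ρT (e 0) = 0)
    (hT : ∀ k : ℕ, ρT (e (k + 1)) = ((cT q k : ℝ) : ℂ) • e k) (m : ℕ) :
    adjoint ρT (e m) = ((cT q m : ℝ) : ℂ) • e (m + 1) := by
  apply ext_of_inner e
  intro j
  rw [adjoint_inner_right, inner_smul_right, inner_e]
  match j with
  | 0 => simp [hT0, Nat.succ_ne_zero]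
  | (j + 1) =>
    rw [hT j, inner_smul_left, inner_e]
    simp only [Complex.conj_ofReal, Nat.add_right_cancel_iff]
    by_cases h : j = m
    · subst h; simp
    · simp [h]

lemma adjR_apply (hR0 : ρR (e 0) = 0) (hR1 : ρR (e 1) = 0)
    (hR : ∀ k : ℕ, ρR (e (k + 2)) = ((cc q k : ℝ) : ℂ) • e k) (m : ℕ) :
    adjoint ρR (e m) = ((cc q m : ℝ) : ℂ) • e (m + 2) := by
  apply ext_of_inner e
  intro j
  rw [adjoint_inner_right, inner_smul_right, inner_e]
  match j with
  | 0 => simp [hR0, Nat.succ_ne_zero]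
  | 1 => simp [hR1]
  | (j + 2) =>
    rw [hR j, inner_smul_left, inner_e]
    simp only [Complex.conj_ofReal, Nat.add_right_cancel_iff]
    by_cases h : j = m
    · subst h; simp
    · simp [h]

lemma P_pow_apply (hP : ∀ k : ℕ, ρP (e k) = ((q ^ (4 * k) : ℝ) : ℂ) • e k) (k n : ℕ) :
    (ρP ^ k) (e n) = ((q ^ (4 * n * k) : ℝ) : ℂ) • e n := by
  induction k with
  | zero => simp
  | succ k ih =>
    rw [pow_succ, ContinuousLinearMap.mul_apply, hP n, map_smul, ih, smul_smul, ← Complex.ofReal_mul, ← pow_add]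
    norm_num [mul_add]
    ring_nf

lemma R_pow_apply (hR : ∀ k : ℕ, ρR (e (k + 2)) = ((cc q k : ℝ) : ℂ) • e k) (l m : ℕ) :
    (ρR ^ l) (e (m + 2 * l)) = ((cRpow q l m : ℝ) : ℂ) • e m := by
  induction l with
  | zero => simp [cRpow]
  | succ l ih =>
    have h2 : m + 2 * (l + 1) = (m + 2 * l) + 2 := by omega
    rw [pow_succ, ContinuousLinearMap.mul_apply, h2, hR, map_smul, ih, smul_smul, ← Complex.ofReal_mul]
    rfl

lemma Radj_pow_apply (hRa : ∀ m : ℕ, adjoint ρR (e m) = ((cc q m : ℝ) : ℂ) • e (m + 2))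
    (l : ℕ) : ∀ m, ((adjoint ρR) ^ l) (e m) = ((cRadj q l m : ℝ) : ℂ) • e (m + 2 * l) := by
  induction l with
  | zero => intro m; simp [cRadj]
  | succ l ih =>
    intro m
    rw [pow_succ, ContinuousLinearMap.mul_apply, hRa, map_smul, ih, smul_smul, ← Complex.ofReal_mul]
    have h2 : m + 2 + 2 * l = m + 2 * (l + 1) := by omega
    rw [h2]; rfl

/-- The family of operators. -/
noncomputable def Fop (ρP ρT ρR : H →L[ℂ] H) : Idx → (H →L[ℂ] H)
  | Sum.inl (k, l) => ρP ^ k * ρR ^ l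
  | Sum.inr (Sum.inl (k, l)) => ρP ^ k * (adjoint ρR) ^ (l + 1)
  | Sum.inr (Sum.inr (Sum.inl (k, l))) => ρP ^ k * ρR ^ l * ρT
  | Sum.inr (Sum.inr (Sum.inr (k, l))) => ρP ^ k * (adjoint ρR) ^ l * adjoint ρT

lemma Fop_apply
    (hP : ∀ k : ℕ, ρP (e k) = ((q ^ (4 * k) : ℝ) : ℂ) • e k)
    (hT0 : ρT (e 0) = 0)
    (hT : ∀ k : ℕ, ρT (e (k + 1)) = ((cT q k : ℝ) : ℂ) • e k)
    (hR0 : ρR (e 0) = 0) (hR1 : ρR (e 1) = 0)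
    (hR : ∀ k : ℕ, ρR (e (k + 2)) = ((cc q k : ℝ) : ℂ) • e k)
    (i : Idx) (n : ℕ) (hn : τidx i ≤ n) :
    Fop ρP ρT ρR i (e n) =
      ((q ^ (4 * μidx i n * Kidx i) * baseC q i n : ℝ) : ℂ) • e (μidx i n) := by
  have hRa := adjR_apply e q ρR hR0 hR1 hR
  have hTa := adjT_apply e q ρT hT0 hT
  rcases i with ⟨k, l⟩ | ⟨⟨k, l⟩ | ⟨⟨k, l⟩ | ⟨k, l⟩⟩⟩
  · -- ρP^k * ρR^l
    simp only [τidx] at hn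
    obtain ⟨m, rfl⟩ : ∃ m, n = m + 2 * l := ⟨n - 2 * l, by omega⟩
    have h2 : m + 2 * l - 2 * l = m := by omega
    simp only [Fop, ContinuousLinearMap.mul_apply, μidx, Kidx, baseC, h2]
    rw [R_pow_apply e q ρR hR, map_smul, P_pow_apply e q ρP hP, smul_smul,
      ← Complex.ofReal_mul]
    congr 1
    push_cast
    ring
  · -- ρP^k * (adjoint ρR)^(l+1)
    have h2 : n + 2 * l + 2 = n + 2 * (l + 1) := by omega
    simp only [Fop, ContinuousLinearMap.mul_apply, μidx, Kidx, baseC, h2]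
    rw [Radj_pow_apply e q ρR hRa, map_smul, P_pow_apply e q ρP hP, smul_smul,
      ← Complex.ofReal_mul]
    congr 1
    push_cast
    ring
  · -- ρP^k * ρR^l * ρT
    simp only [τidx] at hn
    obtain ⟨m, rfl⟩ : ∃ m, n = (m + 2 * l) + 1 := ⟨n - 2 * l - 1, by omega⟩
    have h1 : m + 2 * l + 1 - 2 * l - 1 = m := by omega
    have h2 : m + 2 * l + 1 - 1 = m + 2 * l := by omega
    have h3 : m + 2 * l + 1 - 1 - 2 * l = m := by omega
    have h4 : m + 2 * l - 2 * l = m := by omega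
    simp only [Fop, ContinuousLinearMap.mul_apply, μidx, Kidx, baseC, h1, h2, h3, h4]
    rw [hT, map_smul, map_smul, R_pow_apply e q ρR hR, map_smul, P_pow_apply e q ρP hP,
      smul_smul, smul_smul]
    congr 1
    push_cast
    ring
  · -- ρP^k * (adjoint ρR)^l * adjoint ρT
    have h2 : n + 1 + 2 * l = n + 2 * l + 1 := by omega
    simp only [Fop, ContinuousLinearMap.mul_apply, μidx, Kidx, baseC]
    rw [hTa, map_smul, Radj_pow_apply e q ρR hRa, map_smul, map_smul,
      P_pow_apply e q ρP hP]
    simp only [smul_smul, h2]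
    congr 1
    push_cast
    ring

end OperatorLemmas

open ContinuousLinearMap in
/-- The family of bounded operators on `ℓ²(ℕ)` consisting of
`ρP^k ρR^l` (`k,l ∈ ℕ`), `ρP^k (ρR*)^l` (`k ∈ ℕ`, `l ≥ 1`), `ρP^k ρR^l ρT` (`k,l ∈ ℕ`) and
`ρP^k (ρR*)^l ρT*` (`k,l ∈ ℕ`) is linearly independent over `ℂ`. -/
theorem stmt10 {H : Type*} [NormedAddCommGroup H] [InnerProductSpace ℂ H] [CompleteSpace H]
    (e : HilbertBasis ℕ ℂ H) (q : ℝ) (hq0 : 0 < q) (hq1 : q < 1)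
    (ρP ρT ρR : H →L[ℂ] H)
    (hP : ∀ k : ℕ, ρP (e k) = ((q ^ (4 * k) : ℝ) : ℂ) • e k)
    (hT0 : ρT (e 0) = 0)
    (hT : ∀ k : ℕ, ρT (e (k + 1)) =
      ((q ^ (2 * k) * Real.sqrt (1 - q ^ (4 * (k + 1))) : ℝ) : ℂ) • e k)
    (hR0 : ρR (e 0) = 0) (hR1 : ρR (e 1) = 0)
    (hR : ∀ k : ℕ, ρR (e (k + 2)) =
      ((Real.sqrt ((1 - q ^ (4 * (k + 2))) * (1 - q ^ (4 * (k + 1)))) : ℝ) : ℂ) • e k) :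
    LinearIndependent ℂ
      (fun i : (ℕ × ℕ) ⊕ ((ℕ × ℕ) ⊕ ((ℕ × ℕ) ⊕ (ℕ × ℕ))) =>
        match i with
        | Sum.inl (k, l) => ρP ^ k * ρR ^ l
        | Sum.inr (Sum.inl (k, l)) => ρP ^ k * (adjoint ρR) ^ (l + 1)
        | Sum.inr (Sum.inr (Sum.inl (k, l))) => ρP ^ k * ρR ^ l * ρT
        | Sum.inr (Sum.inr (Sum.inr (k, l))) => ρP ^ k * (adjoint ρR) ^ l * adjoint ρT) := by
  classical
  have hT' : ∀ k : ℕ, ρT (e (k + 1)) = ((cT q k : ℝ) : ℂ) • e k := hT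
  have hR' : ∀ k : ℕ, ρR (e (k + 2)) = ((cc q k : ℝ) : ℂ) • e k := hR
  rw [linearIndependent_iff']
  intro s g hsum i₀ hi₀
  have hsum' : ∑ i ∈ s, g i • Fop ρP ρT ρR i = 0 := by
    rw [← hsum]
    refine Finset.sum_congr rfl fun i _ => ?_
    rcases i with ⟨k, l⟩ | ⟨⟨k, l⟩ | ⟨⟨k, l⟩ | ⟨k, l⟩⟩⟩ <;> rfl
  set d : ℤ := δidx i₀ with hd
  set N : ℕ := s.sup τidx with hN
  have hτ : ∀ i ∈ s, τidx i ≤ N := fun i hi => Finset.le_sup hi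
  set P : Polynomial ℂ :=
    ∑ i ∈ s.filter (fun i => δidx i = d), Polynomial.monomial (Kidx i) (g i) with hP_def
  -- each point q^(4 * μidx i₀ (N+t)) is a root of P
  have key : ∀ t : ℕ, P.IsRoot (((q : ℂ)) ^ (4 * μidx i₀ (N + t))) := by
    intro t
    set n : ℕ := N + t with hn
    have hτn : ∀ i ∈ s, τidx i ≤ n := fun i hi => le_trans (hτ i hi) (by omega)
    set m₀ : ℕ := μidx i₀ n with hm₀
    have h1 : (∑ i ∈ s, g i • Fop ρP ρT ρR i) (e n) = 0 := by rw [hsum']; simp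
    rw [ContinuousLinearMap.sum_apply] at h1
    have h2 : ∑ i ∈ s, g i * ⟪(e m₀ : H), Fop ρP ρT ρR i (e n)⟫ = 0 := by
      have := congrArg (fun x => ⟪(e m₀ : H), x⟫) h1
      simpa [inner_sum, inner_smul_right] using this
    have h3 : ∀ i ∈ s, g i * ⟪(e m₀ : H), Fop ρP ρT ρR i (e n)⟫ =
        if δidx i = d then
          g i * ((q ^ (4 * m₀ * Kidx i) * baseC q i₀ n : ℝ) : ℂ) else 0 := by
      intro i hi
      rw [Fop_apply e q ρP ρT ρR hP hT0 hT' hR0 hR1 hR' i n (hτn i hi), inner_smul_right,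
        inner_e]
      by_cases hδ : δidx i = d
      · have hμ : μidx i n = m₀ := by
          have h4 := μ_cast i n (hτn i hi)
          have h5 := μ_cast i₀ n (hτn i₀ hi₀)
          omega
        rw [if_pos hδ, hμ, if_pos rfl, mul_one, δ_eq_base (q := q) (hd ▸ hδ)]
      · have hμ : μidx i n ≠ m₀ := by
          have h4 := μ_cast i n (hτn i hi)
          have h5 := μ_cast i₀ n (hτn i₀ hi₀)
          omega
        rw [if_neg hδ, if_neg (fun h => hμ h.symm), mul_zero, mul_zero]
    rw [Finset.sum_congr rfl h3, ← Finset.sum_filter] at h2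
    have h6 : ∑ i ∈ s.filter (fun i => δidx i = d),
        g i * ((q ^ (4 * m₀ * Kidx i) * baseC q i₀ n : ℝ) : ℂ) =
        P.eval ((q : ℂ) ^ (4 * m₀)) * ((baseC q i₀ n : ℝ) : ℂ) := by
      rw [hP_def, Polynomial.eval_finset_sum, Finset.sum_mul]
      refine Finset.sum_congr rfl fun i hi => ?_
      rw [Polynomial.eval_monomial]
      push_cast
      rw [pow_mul]
      ring
    rw [h6] at h2
    have hB : ((baseC q i₀ n : ℝ) : ℂ) ≠ 0 := by
      exact_mod_cast (baseC_pos hq0 hq1 i₀ n).ne'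
    have h7 := (mul_eq_zero.mp h2).resolve_right hB
    simpa [Polynomial.IsRoot, hm₀] using h7
  -- infinitely many distinct roots, so P = 0
  have hPzero : P = 0 := by
    apply Polynomial.eq_zero_of_infinite_isRoot
    refine Set.infinite_of_injective_forall_mem
      (f := fun t : ℕ => ((q : ℂ)) ^ (4 * μidx i₀ (N + t))) ?_ ?_
    · intro t t' h
      have hqr : q ^ (4 * μidx i₀ (N + t)) = q ^ (4 * μidx i₀ (N + t')) := by
        have : ((q ^ (4 * μidx i₀ (N + t)) : ℝ) : ℂ)
            = ((q ^ (4 * μidx i₀ (N + t')) : ℝ) : ℂ) := by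
          push_cast
          exact h
        exact_mod_cast this
      have hinj : 4 * μidx i₀ (N + t) = 4 * μidx i₀ (N + t') := by
        by_contra hne
        rcases lt_or_gt_of_ne hne with hlt | hlt
        · exact absurd hqr.symm
            (ne_of_lt ((pow_lt_pow_iff_right_of_lt_one₀ hq0 hq1).mpr hlt))
        · exact absurd hqr
            (ne_of_lt ((pow_lt_pow_iff_right_of_lt_one₀ hq0 hq1).mpr hlt))
      have h4 := μ_cast i₀ (N + t) (le_trans (hτ i₀ hi₀) (by omega))
      have h5 := μ_cast i₀ (N + t') (le_trans (hτ i₀ hi₀) (by omega))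
      omega
    · intro t
      exact key t
  -- extract the coefficient
  have hcoeff : P.coeff (Kidx i₀) = g i₀ := by
    rw [hP_def, Polynomial.finset_sum_coeff]
    have hzero : ∀ i ∈ s.filter (fun i => δidx i = d), i ≠ i₀ →
        ((Polynomial.monomial (Kidx i)) (g i)).coeff (Kidx i₀) = 0 := by
      intro i hi hne
      rw [Polynomial.coeff_monomial,
        if_neg (fun hK => hne (δ_K_inj ((Finset.mem_filter.mp hi).2.trans hd) hK))]
    have hsingle := Finset.sum_eq_single_of_mem
      (s := s.filter (fun i => δidx i = d))
      (f := fun b => ((Polynomial.monomial (Kidx b)) (g b)).coeff (Kidx i₀))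
      i₀ (Finset.mem_filter.mpr ⟨hi₀, hd.symm⟩) hzero
    rw [hsingle]
    show ((Polynomial.monomial (Kidx i₀)) (g i₀)).coeff (Kidx i₀) = g i₀
    rw [Polynomial.coeff_monomial, if_pos rfl]
  rw [hPzero] at hcoeff
  simpa using hcoeff.symm
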